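/- There exists a family of maps φ_{a,b} : [0,a] → [0,b], defined for all a, b ∈ (0,∞), such that each φ_{a,b} is an orientation-preserving C¹ diffeomorphism of [0,a] onto [0,b] and: (1) for all a, b, c ∈ (0,∞) and all x ∈ [0,a], φ_{b,c}(φ_{a,b}(x)) = φ_{a,c}(x); (2) for all a, b, the derivative of φ_{a,b} equals 1 at both endpoints 0 and a; (3) for every ε > 0 there exists δ > 0 such that for all a, b with |b/a − 1| < δ and all x ∈ [0,a], |φ'_{a,b}(x) − 1| < ε. -/

import Mathlib

open Set

noncomputable def phiF (a b x : ℝ) : ℝ :=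
  if x ≤ a / 2 then x / (1 + (2 / b - 2 / a) * x)
  else b - (a - x) / (1 + (2 / b - 2 / a) * (a - x))

lemma denom_pos {a b x : ℝ} (ha : 0 < a) (hb : 0 < b) (hx0 : 0 ≤ x) (hx2 : 2 * x ≤ a) :
    0 < 1 + (2 / b - 2 / a) * x := by
  have h : 1 + (2 / b - 2 / a) * x = (a * b + 2 * (a - b) * x) / (a * b) := by
    field_simp
  rw [h]
  apply div_pos _ (by positivity)
  nlinarith [mul_pos ha hb, mul_nonneg ha.le hx0, mul_le_mul_of_nonneg_left hx2 hb.le]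

lemma mobius_le_half {a b x : ℝ} (ha : 0 < a) (hb : 0 < b) (hx0 : 0 ≤ x) (hx2 : 2 * x ≤ a) :
    x / (1 + (2 / b - 2 / a) * x) ≤ b / 2 := by
  have hd := denom_pos ha hb hx0 hx2
  rw [div_le_iff₀ hd]
  have key : b / 2 * (1 + (2 / b - 2 / a) * x) - x = b * (a - 2 * x) / (2 * a) := by
    field_simp; ring
  have h2 : 0 ≤ b * (a - 2 * x) / (2 * a) :=
    div_nonneg (mul_nonneg hb.le (by linarith)) (by positivity)
  linarith

lemma mobius_lt_half {a b x : ℝ} (ha : 0 < a) (hb : 0 < b) (hx0 : 0 ≤ x) (hx2 : 2 * x < a) :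
    x / (1 + (2 / b - 2 / a) * x) < b / 2 := by
  have hd := denom_pos ha hb hx0 hx2.le
  rw [div_lt_iff₀ hd]
  have key : b / 2 * (1 + (2 / b - 2 / a) * x) - x = b * (a - 2 * x) / (2 * a) := by
    field_simp; ring
  have h2 : 0 < b * (a - 2 * x) / (2 * a) :=
    div_pos (mul_pos hb (by linarith)) (by positivity)
  linarith

lemma mobius_hasDerivAt {c x : ℝ} (h : 1 + c * x ≠ 0) :
    HasDerivAt (fun y => y / (1 + c * y)) ((1 + c * x)⁻¹ ^ 2) x := by
  have h1 : HasDerivAt (fun y : ℝ => 1 + c * y) c x := by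
    simpa using ((hasDerivAt_id x).const_mul c).const_add 1
  have h2 : HasDerivAt (fun y => y / (1 + c * y)) _ x := (hasDerivAt_id x).div h1 h
  convert h2 using 1
  simp only [id]
  field_simp
  ring

lemma mobius2_hasDerivAt {a b c x : ℝ} (h : 1 + c * (a - x) ≠ 0) :
    HasDerivAt (fun y => b - (a - y) / (1 + c * (a - y))) ((1 + c * (a - x))⁻¹ ^ 2) x := by
  have h1 : HasDerivAt (fun y : ℝ => a - y) (-1) x := by
    simpa using (hasDerivAt_id x).const_sub a
  have h2 := (mobius_hasDerivAt h).comp x h1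
  have h3 : HasDerivAt (fun y => b - (a - y) / (1 + c * (a - y))) _ x := (hasDerivAt_const x b).sub h2
  convert h3 using 1
  ring

lemma mid_eq {a b : ℝ} (ha : 0 < a) (hb : 0 < b) :
    (a / 2) / (1 + (2 / b - 2 / a) * (a / 2)) = b - (a - a / 2) / (1 + (2 / b - 2 / a) * (a - a / 2)) := by
  have h : 1 + (2 / b - 2 / a) * (a / 2) = a / b := by field_simp; ring
  have h2 : a - a / 2 = a / 2 := by ring
  rw [h2, h]
  have h3 : a / 2 / (a / b) = b / 2 := by
    rw [div_div_div_comm, div_self ha.ne', one_div_div]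
  rw [h3]
  ring

lemma hasDerivWithinAt_of_nmem_closure' {f : ℝ → ℝ} {d x : ℝ} {s : Set ℝ}
    (h : x ∉ closure s) : HasDerivWithinAt f d s x :=
  hasDerivWithinAt_iff_hasFDerivWithinAt.mpr (HasFDerivWithinAt.of_notMem_closure h)

lemma phiF_hasDerivWithinAt {a b : ℝ} (ha : 0 < a) (hb : 0 < b) {x : ℝ} (hx : x ∈ Icc 0 a) :
    HasDerivWithinAt (phiF a b) ((1 + (2 / b - 2 / a) * min x (a - x))⁻¹ ^ 2) (Icc 0 a) x := by
  set c := 2 / b - 2 / a with hc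
  have hIcc : Icc (0:ℝ) a = Icc 0 (a/2) ∪ Icc (a/2) a :=
    (Icc_union_Icc_eq_Icc (by linarith) (by linarith)).symm
  have key₁ : ∀ y ∈ Icc (0:ℝ) (a/2), phiF a b y = y / (1 + c * y) := fun y hy => if_pos hy.2
  have key₂ : ∀ y ∈ Icc (a/2) a, phiF a b y = b - (a - y) / (1 + c * (a - y)) := by
    intro y hy
    rcases eq_or_lt_of_le hy.1 with h | h
    · rw [phiF, if_pos (le_of_eq h.symm), ← h]
      exact mid_eq ha hb
    · exact if_neg (not_le.mpr h)
  have H1 : HasDerivWithinAt (phiF a b) ((1 + c * min x (a - x))⁻¹ ^ 2) (Icc 0 (a/2)) x := by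
    by_cases hx2 : x ≤ a / 2
    · have hmin : min x (a - x) = x := min_eq_left (by linarith)
      rw [hmin]
      have hne : 1 + c * x ≠ 0 := (denom_pos ha hb hx.1 (by linarith)).ne'
      exact ((mobius_hasDerivAt hne).hasDerivWithinAt).congr key₁
        (key₁ x ⟨hx.1, hx2⟩)
    · exact hasDerivWithinAt_of_nmem_closure' (by
        rw [(isClosed_Icc).closure_eq]
        exact fun h => hx2 h.2)
  have H2 : HasDerivWithinAt (phiF a b) ((1 + c * min x (a - x))⁻¹ ^ 2) (Icc (a/2) a) x := by
    by_cases hx2 : a / 2 ≤ x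
    · have hmin : min x (a - x) = a - x := min_eq_right (by linarith)
      rw [hmin]
      have hne : 1 + c * (a - x) ≠ 0 := (denom_pos ha hb (by linarith [hx.2]) (by linarith)).ne'
      exact ((mobius2_hasDerivAt hne).hasDerivWithinAt).congr key₂
        (key₂ x ⟨hx2, hx.2⟩)
    · exact hasDerivWithinAt_of_nmem_closure' (by
        rw [(isClosed_Icc).closure_eq]
        exact fun h => hx2 h.1)
  rw [hIcc]
  exact H1.union H2

lemma phiF_derivWithin {a b : ℝ} (ha : 0 < a) (hb : 0 < b) {x : ℝ} (hx : x ∈ Icc 0 a) :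
    derivWithin (phiF a b) (Icc 0 a) x = (1 + (2 / b - 2 / a) * min x (a - x))⁻¹ ^ 2 :=
  (phiF_hasDerivWithinAt ha hb hx).derivWithin (uniqueDiffOn_Icc (by linarith) x hx)

lemma min_mem {a x : ℝ} (hx : x ∈ Icc 0 a) : 0 ≤ min x (a - x) ∧ 2 * min x (a - x) ≤ a := by
  constructor
  · exact le_min hx.1 (by linarith [hx.2])
  · calc 2 * min x (a - x) = min x (a - x) + min x (a - x) := by ring
      _ ≤ x + (a - x) := add_le_add (min_le_left _ _) (min_le_right _ _)
      _ = a := by ring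

lemma phiF_denom_pos {a b : ℝ} (ha : 0 < a) (hb : 0 < b) {x : ℝ} (hx : x ∈ Icc 0 a) :
    0 < 1 + (2 / b - 2 / a) * min x (a - x) :=
  denom_pos ha hb (min_mem hx).1 (min_mem hx).2

lemma phiF_contOn {a b : ℝ} (ha : 0 < a) (hb : 0 < b) :
    ContinuousOn (phiF a b) (Icc 0 a) := fun x hx =>
  (phiF_hasDerivWithinAt ha hb hx).differentiableWithinAt.continuousWithinAt

lemma phiF_zero {a b : ℝ} (ha : 0 < a) : phiF a b 0 = 0 := by
  rw [phiF, if_pos (by linarith)]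
  simp

lemma phiF_top {a b : ℝ} (ha : 0 < a) : phiF a b a = b := by
  rw [phiF, if_neg (by intro h; linarith)]
  simp

lemma phiF_strictMono {a b : ℝ} (ha : 0 < a) (hb : 0 < b) :
    StrictMonoOn (phiF a b) (Icc 0 a) := by
  apply strictMonoOn_of_deriv_pos (convex_Icc 0 a) (phiF_contOn ha hb)
  intro x hx
  rw [interior_Icc] at hx
  have hx' : x ∈ Icc 0 a := ⟨hx.1.le, hx.2.le⟩
  have hd := (phiF_hasDerivWithinAt ha hb hx').hasDerivAt (Icc_mem_nhds hx.1 hx.2)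
  rw [hd.deriv]
  have := phiF_denom_pos ha hb hx'
  positivity

lemma phiF_cocycle_half {u p q : ℝ} (h1 : 1 + p * u ≠ 0) (h2 : 1 + (p + q) * u ≠ 0) :
    (u / (1 + p * u)) / (1 + q * (u / (1 + p * u))) = u / (1 + (p + q) * u) := by
  have key : 1 + q * (u / (1 + p * u)) = (1 + (p + q) * u) / (1 + p * u) := by
    rw [mul_comm p u] at h1
    field_simp
    ring
  rw [key, div_div_div_comm, div_self h1, div_one]

set_option maxHeartbeats 1000000 in
theorem exists_compatible_C1_interval_diffeo_family :
    ∃ φ : ℝ → ℝ → ℝ → ℝ,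
      (∀ a b : ℝ, 0 < a → 0 < b →
        StrictMonoOn (φ a b) (Icc 0 a) ∧
        φ a b '' Icc 0 a = Icc 0 b ∧
        ContDiffOn ℝ 1 (φ a b) (Icc 0 a) ∧
        (∀ x ∈ Icc (0:ℝ) a, 0 < derivWithin (φ a b) (Icc 0 a) x)) ∧
      (∀ a b c : ℝ, 0 < a → 0 < b → 0 < c →
        ∀ x ∈ Icc (0:ℝ) a, φ b c (φ a b x) = φ a c x) ∧
      (∀ a b : ℝ, 0 < a → 0 < b →
        derivWithin (φ a b) (Icc 0 a) 0 = 1 ∧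
        derivWithin (φ a b) (Icc 0 a) a = 1) ∧
      (∀ ε : ℝ, 0 < ε → ∃ δ : ℝ, 0 < δ ∧
        ∀ a b : ℝ, 0 < a → 0 < b → |b / a - 1| < δ →
          ∀ x ∈ Icc (0:ℝ) a, |derivWithin (φ a b) (Icc 0 a) x - 1| < ε) := by
  refine ⟨phiF, ?_, ?_, ?_, ?_⟩
  · intro a b ha hb
    have hmono := phiF_strictMono ha hb
    refine ⟨hmono, ?_, ?_, ?_⟩
    · -- image
      apply Subset.antisymm
      · rintro y ⟨x, hx, rfl⟩
        constructor
        · calc (0:ℝ) = phiF a b 0 := (phiF_zero ha).symm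
            _ ≤ phiF a b x := hmono.monotoneOn (left_mem_Icc.mpr ha.le) hx hx.1
        · calc phiF a b x ≤ phiF a b a := hmono.monotoneOn hx (right_mem_Icc.mpr ha.le) hx.2
            _ = b := phiF_top ha
      · have := intermediate_value_Icc ha.le (phiF_contOn ha hb)
        rwa [phiF_zero ha, phiF_top ha] at this
    · -- ContDiffOn
      have huniq : UniqueDiffOn ℝ (Icc (0:ℝ) a) := uniqueDiffOn_Icc ha
      have hdiff : DifferentiableOn ℝ (phiF a b) (Icc 0 a) := fun x hx =>
        (phiF_hasDerivWithinAt ha hb hx).differentiableWithinAt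
      have hcontD : ContinuousOn (fun x => (1 + (2 / b - 2 / a) * min x (a - x))⁻¹ ^ 2)
          (Icc 0 a) := by
        apply ContinuousOn.pow
        apply ContinuousOn.inv₀
        · exact (continuous_const.add (continuous_const.mul
            (continuous_id.min (continuous_const.sub continuous_id)))).continuousOn
        · exact fun x hx => (phiF_denom_pos ha hb hx).ne'
      have : ContDiffOn ℝ (0 + 1) (phiF a b) (Icc 0 a) := by
        rw [contDiffOn_succ_iff_derivWithin huniq]
        refine ⟨hdiff, by simp, ?_⟩
        rw [contDiffOn_zero]
        exact hcontD.congr (fun x hx => phiF_derivWithin ha hb hx)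
      simpa using this
    · intro x hx
      rw [phiF_derivWithin ha hb hx]
      have := phiF_denom_pos ha hb hx
      positivity
  · -- cocycle
    intro a b c ha hb hc x hx
    have hpq : (2 / b - 2 / a) + (2 / c - 2 / b) = 2 / c - 2 / a := by ring
    by_cases hx2 : x ≤ a / 2
    · have hne1 : 1 + (2 / b - 2 / a) * x ≠ 0 := (denom_pos ha hb hx.1 (by linarith)).ne'
      have hne2 : 1 + ((2 / b - 2 / a) + (2 / c - 2 / b)) * x ≠ 0 := by
        rw [hpq]; exact (denom_pos ha hc hx.1 (by linarith)).ne'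
      have h1 : phiF a b x = x / (1 + (2 / b - 2 / a) * x) := if_pos hx2
      have hle : phiF a b x ≤ b / 2 := by
        rw [h1]; exact mobius_le_half ha hb hx.1 (by linarith)
      have h2 : phiF b c (phiF a b x) =
          phiF a b x / (1 + (2 / c - 2 / b) * phiF a b x) := if_pos hle
      rw [h2, h1, phiF_cocycle_half hne1 hne2, phiF, if_pos hx2, hpq]
    · push_neg at hx2
      have hu0 : (0:ℝ) ≤ a - x := by linarith [hx.2]
      have hu2 : 2 * (a - x) < a := by linarith
      have hne1 : 1 + (2 / b - 2 / a) * (a - x) ≠ 0 := (denom_pos ha hb hu0 hu2.le).ne'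
      have hne2 : 1 + ((2 / b - 2 / a) + (2 / c - 2 / b)) * (a - x) ≠ 0 := by
        rw [hpq]; exact (denom_pos ha hc hu0 hu2.le).ne'
      have h1 : phiF a b x = b - (a - x) / (1 + (2 / b - 2 / a) * (a - x)) :=
        if_neg (not_le.mpr hx2)
      have hlt : (a - x) / (1 + (2 / b - 2 / a) * (a - x)) < b / 2 :=
        mobius_lt_half ha hb hu0 hu2
      have hcond : ¬ phiF a b x ≤ b / 2 := by rw [h1]; push_neg; linarith
      have h2 : phiF b c (phiF a b x) =
          c - (b - phiF a b x) / (1 + (2 / c - 2 / b) * (b - phiF a b x)) := if_neg hcond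
      have h3 : b - phiF a b x = (a - x) / (1 + (2 / b - 2 / a) * (a - x)) := by
        rw [h1]; ring
      rw [h2, h3, phiF_cocycle_half hne1 hne2, phiF, if_neg (not_le.mpr hx2), hpq]
  · -- endpoint derivatives
    intro a b ha hb
    constructor
    · rw [phiF_derivWithin ha hb (left_mem_Icc.mpr ha.le)]
      rw [min_eq_left (by linarith : (0:ℝ) ≤ a - 0)]
      norm_num
    · rw [phiF_derivWithin ha hb (right_mem_Icc.mpr ha.le)]
      rw [min_eq_right (by linarith : a - a ≤ a)]
      norm_num
  · -- uniform estimate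
    intro ε hε
    refine ⟨min (1/4) (ε/8), by positivity, ?_⟩
    intro a b ha hb hab x hx
    have hδ1 : min (1/4) (ε/8) ≤ 1/4 := min_le_left _ _
    have hδ2 : min (1/4) (ε/8) ≤ ε/8 := min_le_right _ _
    set δ := min (1/4) (ε/8) with hδ
    rw [phiF_derivWithin ha hb hx]
    set m := min x (a - x) with hm
    have hm0 : 0 ≤ m := (min_mem hx).1
    have hm2 : 2 * m ≤ a := (min_mem hx).2
    set t := 1 + (2 / b - 2 / a) * m with ht
    have ht0 : 0 < t := phiF_denom_pos ha hb hx
    -- |b - a| < δ * a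
    have habs : |b - a| < δ * a := by
      have h1 : b / a - 1 = (b - a) / a := by field_simp
      rw [h1, abs_div, abs_of_pos ha, div_lt_iff₀ ha] at hab
      exact hab
    have hb34 : 3 * a / 4 < b := by
      have := abs_lt.mp habs
      nlinarith
    have hδ0 : (0:ℝ) < δ := by rw [hδ]; positivity
    -- |t - 1| bound
    have htb : |t - 1| < 4 * δ / 3 := by
      have h1 : t - 1 = (2 / b - 2 / a) * m := by rw [ht]; ring
      have h2 : |2 / b - 2 / a| = 2 * |b - a| / (a * b) := by
        rw [show 2 / b - 2 / a = 2 * (a - b) / (a * b) by field_simp]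
        rw [abs_div, abs_of_pos (by positivity : (0:ℝ) < a * b)]
        rw [abs_mul, abs_of_pos (by norm_num : (0:ℝ) < 2), abs_sub_comm]
      have h3 : |t - 1| ≤ 2 * |b - a| / (a * b) * (a / 2) := by
        rw [h1, abs_mul, abs_of_nonneg hm0, h2]
        exact mul_le_mul_of_nonneg_left (by linarith) (by positivity)
      have h4 : 2 * |b - a| / (a * b) * (a / 2) = |b - a| / b := by field_simp
      rw [h4] at h3
      have h5 : |b - a| / b < 4 * δ / 3 := by
        rw [div_lt_iff₀ hb]
        nlinarith [habs, hb34, hδ0]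
      linarith
    have hs := abs_lt.mp htb
    have htlo : 2/3 < t := by nlinarith [hs.1, hδ1]
    have hthi : t < 4/3 := by nlinarith [hs.2, hδ1]
    clear_value t m δ
    have heq : (t⁻¹) ^ 2 - 1 = (1 - t ^ 2) / t ^ 2 := by
      field_simp
    rw [heq, abs_div, abs_of_pos (by positivity : (0:ℝ) < t ^ 2),
      div_lt_iff₀ (by positivity : (0:ℝ) < t ^ 2)]
    have habs2 : |1 - t ^ 2| = |t - 1| * (1 + t) := by
      have hfac : 1 - t ^ 2 = (1 - t) * (1 + t) := by ring
      rw [hfac, abs_mul, abs_of_pos (by linarith : (0:ℝ) < 1 + t), abs_sub_comm]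
    rw [habs2]
    have c1a := mul_lt_mul_of_pos_right htb (show (0:ℝ) < 1 + t by linarith)
    have c1b := mul_lt_mul_of_pos_left (show (1:ℝ) + t < 7/3 by linarith)
      (show (0:ℝ) < 4 * δ / 3 by linarith)
    have hq : (4:ℝ)/9 < t ^ 2 := by
      calc (4:ℝ)/9 = (2/3) ^ 2 := by norm_num
        _ < t ^ 2 := by
          apply pow_lt_pow_left₀ htlo (by norm_num) (by norm_num)
    have c3 := mul_lt_mul_of_pos_left hq hε
    have c4 : |t - 1| * (1 + t) < 28 * δ / 9 := by nlinarith [c1a, c1b]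
    nlinarith [c4, c3, hδ2, hε]
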